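/- Let (F_τ) be a monotone increasing family in 𝒮, continuous in τ. Then for every τ, the sets Up_{τ+} = ⋂_{δ>0} Up(F_{τ+δ}) and Down_τ = Down(F_τ) are disjoint: Up_{τ+} ∩ Down_τ = ∅. -/

import Mathlib

open Set MeasureTheory Filter Topology

namespace SkewPaper

/-- A bi-infinite sequence over the alphabet `{1,…,N}` (modelled as `Fin N`) is allowed
by the 0-1 transition matrix `A`. -/
def Allowed {N : ℕ} (A : Fin N → Fin N → Bool) (ω : ℤ → Fin N) : Prop :=
  ∀ n : ℤ, A (ω n) (ω (n + 1)) = true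

/-- The subshift of finite type `Σ ⊆ {1,…,N}^ℤ` determined by the transition matrix `A`,
with the product (= metric `d(ω̄,ω) = 2^{-min{|n| : ω̄ₙ ≠ ωₙ}}`) topology. -/
abbrev Sig (N : ℕ) (A : Fin N → Fin N → Bool) : Type :=
  {ω : ℤ → Fin N // Allowed A ω}

variable {N : ℕ} {A : Fin N → Fin N → Bool}

/-- The left shift `σ : Σ → Σ`. -/
def shift (ω : Sig N A) : Sig N A :=
  ⟨fun n => ω.1 (n + 1), fun n => ω.2 (n + 1)⟩

/-- The inverse `σ⁻¹` of the left shift. -/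
def shiftInv (ω : Sig N A) : Sig N A :=
  ⟨fun n => ω.1 (n - 1), fun n => by
    show A (ω.1 (n - 1)) (ω.1 (n + 1 - 1)) = true
    have h := ω.2 (n - 1)
    have e1 : n - 1 + 1 = n := by ring
    have e2 : n + 1 - 1 = n := by ring
    rw [e1] at h; rw [e2]; exact h⟩

/-- Topological transitivity of the shift `σ` on `Σ`. -/
def ShiftTransitive (N : ℕ) (A : Fin N → Fin N → Bool) : Prop :=
  ∀ U V : Set (Sig N A), IsOpen U → IsOpen V → U.Nonempty → V.Nonempty →
    ∃ n : ℕ, ((shift (A := A))^[n] '' U ∩ V).Nonempty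

/-- The class `𝒮` of skew products `F(ω,x) = (σω, f_ω(x))` over the subshift `Σ`,
with fiber `I = [0,1]`.  The fiber maps `f_ω` (encoded as maps `ℝ → ℝ` whose behaviour
is prescribed on `I`) are orientation-preserving `C¹` diffeomorphisms sending `I`
strictly inside itself, with `C¹` inverses `fInv ω`, and `ω ↦ f_ω` is continuous in the
`C¹` sense. -/
structure SkewSys (N : ℕ) (A : Fin N → Fin N → Bool) where
  f : Sig N A → ℝ → ℝ
  fInv : Sig N A → ℝ → ℝ
  contDiff : ∀ ω, ContDiffOn ℝ 1 (f ω) (Icc 0 1)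
  deriv_pos : ∀ ω, ∀ x ∈ Icc (0:ℝ) 1, 0 < derivWithin (f ω) (Icc 0 1) x
  maps_in : ∀ ω, MapsTo (f ω) (Icc 0 1) (Ioo 0 1)
  leftInv : ∀ ω, ∀ x ∈ Icc (0:ℝ) 1, fInv ω (f ω x) = x
  inv_contDiff : ∀ ω, ContDiffOn ℝ 1 (fInv ω) (Icc 0 1)
  cont : ContinuousOn (fun p : Sig N A × ℝ => f p.1 p.2) (univ ×ˢ Icc 0 1)
  cont_deriv : ContinuousOn
    (fun p : Sig N A × ℝ => derivWithin (f p.1) (Icc 0 1) p.2) (univ ×ˢ Icc 0 1)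
  inv_cont : ContinuousOn (fun p : Sig N A × ℝ => fInv p.1 p.2) (univ ×ˢ Icc 0 1)
  inv_cont_deriv : ContinuousOn
    (fun p : Sig N A × ℝ => derivWithin (fInv p.1) (Icc 0 1) p.2) (univ ×ˢ Icc 0 1)

/-- The skew product map `F : Σ × ℝ → Σ × ℝ`, `(ω,x) ↦ (σω, f_ω(x))`. -/
def FMap (F : SkewSys N A) : Sig N A × ℝ → Sig N A × ℝ :=
  fun p => (shift p.1, F.f p.1 p.2)

/-- The phase space `Σ × I`, viewed inside `Σ × ℝ`. -/
def phaseSpace (N : ℕ) (A : Fin N → Fin N → Bool) : Set (Sig N A × ℝ) :=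
  univ ×ˢ Icc 0 1

/-- The graph of `γ` drifts up: `F(Γ) > Γ`, i.e. the graph function
`ω ↦ f_{σ⁻¹ω}(γ(σ⁻¹ω))` of `F(Γ)` is pointwise strictly above `γ`. -/
def DriftsUp (F : SkewSys N A) (γ : Sig N A → ℝ) : Prop :=
  ∀ ω, γ ω < F.f (shiftInv ω) (γ (shiftInv ω))

/-- The graph of `γ` drifts down: `F(Γ) < Γ`. -/
def DriftsDown (F : SkewSys N A) (γ : Sig N A → ℝ) : Prop :=
  ∀ ω, F.f (shiftInv ω) (γ (shiftInv ω)) < γ ω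

/-- `Up(F)`: the set of points `p = (ω,x)` drifting up, i.e. such that there is a
continuous `γ : Σ → I` whose graph drifts up with `γ(ω) < x < f_{σ⁻¹ω}(γ(σ⁻¹ω))`. -/
def Up (F : SkewSys N A) : Set (Sig N A × ℝ) :=
  {p | ∃ γ : Sig N A → ℝ, Continuous γ ∧ (∀ ω, γ ω ∈ Icc (0:ℝ) 1) ∧ DriftsUp F γ ∧
    γ p.1 < p.2 ∧ p.2 < F.f (shiftInv p.1) (γ (shiftInv p.1))}

/-- `Down(F)`: the set of points drifting down. -/
def Down (F : SkewSys N A) : Set (Sig N A × ℝ) :=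
  {p | ∃ γ : Sig N A → ℝ, Continuous γ ∧ (∀ ω, γ ω ∈ Icc (0:ℝ) 1) ∧ DriftsDown F γ ∧
    F.f (shiftInv p.1) (γ (shiftInv p.1)) < p.2 ∧ p.2 < γ p.1}

/-- The anchored set `Indiff(F) = (Σ × I) \ (Up(F) ∪ Down(F))`. -/
def Indiff (F : SkewSys N A) : Set (Sig N A × ℝ) :=
  phaseSpace N A \ (Up F ∪ Down F)

/-- The nonwandering set `Ω(F)`: points `p ∈ Σ × I` such that every neighborhood `U`
of `p` in `Σ × I` satisfies `F^n(U) ∩ U ≠ ∅` for some `n ≥ 1`. -/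
def NonWandering (F : SkewSys N A) : Set (Sig N A × ℝ) :=
  {p | p ∈ phaseSpace N A ∧ ∀ U : Set (Sig N A × ℝ), IsOpen U → p ∈ U →
    ∃ n : ℕ, 1 ≤ n ∧ ∃ q ∈ U ∩ phaseSpace N A, (FMap F)^[n] q ∈ U ∩ phaseSpace N A}

/-- The partial order `F ≺ F̃` on `𝒮`: `f_ω(x) < f̃_ω(x)` for all `ω ∈ Σ`, `x ∈ I`. -/
def Prec (F G : SkewSys N A) : Prop :=
  ∀ ω, ∀ x ∈ Icc (0:ℝ) 1, F.f ω x < G.f ω x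

/-- A skew product is multistep if its fiber maps depend only on finitely many
coordinates `ω_{-m}, …, ω_m` of `ω`. -/
def Multistep (F : SkewSys N A) : Prop :=
  ∃ m : ℕ, ∀ ω ω' : Sig N A, (∀ n : ℤ, n.natAbs ≤ m → ω.1 n = ω'.1 n) → F.f ω = F.f ω'

/-- The `C¹` distance `dist(F,F̃) = max_ω dist_{C¹}(f_ω^{±1}, f̃_ω^{±1})` on `𝒮`. -/
noncomputable def SDist (F G : SkewSys N A) : ℝ :=
  ⨆ p : Sig N A × Icc (0:ℝ) 1,
    max
      (max |F.f p.1 p.2 - G.f p.1 p.2|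
        |derivWithin (F.f p.1) (Icc 0 1) p.2 - derivWithin (G.f p.1) (Icc 0 1) p.2|)
      (max |F.fInv p.1 p.2 - G.fInv p.1 p.2|
        |derivWithin (F.fInv p.1) (Icc 0 1) p.2 - derivWithin (G.fInv p.1) (Icc 0 1) p.2|)

/-- The standard measure `m = μ × Leb` on `Σ × I` (with `Leb` Lebesgue measure
restricted to `I = [0,1]`). -/
noncomputable def stdMeasure (μ : Measure (Sig N A)) : Measure (Sig N A × ℝ) :=
  μ.prod (volume.restrict (Icc 0 1))

/-- A family `(F_τ)_{τ ∈ (a,b)}` in `𝒮` is monotone increasing if `F_{τ₁} ≺ F_{τ₂}`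
whenever `τ₁ < τ₂`. -/
def MonoFam (F : ℝ → SkewSys N A) (a b : ℝ) : Prop :=
  ∀ τ₁ ∈ Ioo a b, ∀ τ₂ ∈ Ioo a b, τ₁ < τ₂ → Prec (F τ₁) (F τ₂)

/-- A family `(F_τ)_{τ ∈ (a,b)}` in `𝒮` is continuous in `τ` for the metric `dist`. -/
def ContFam (F : ℝ → SkewSys N A) (a b : ℝ) : Prop :=
  ∀ τ ∈ Ioo a b, ∀ ε : ℝ, 0 < ε → ∃ δ > 0,
    ∀ τ' ∈ Ioo a b, |τ' - τ| < δ → SDist (F τ') (F τ) < ε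

/-- The pushforward `Γ ↦ F(Γ)` on graph functions: the graph of `pushGraph F γ`,
namely `ω ↦ f_{σ⁻¹ω}(γ(σ⁻¹ω))`, is the image `F(Γ)` of the graph `Γ` of `γ`. -/
def pushGraph (F : SkewSys N A) (γ : Sig N A → ℝ) : Sig N A → ℝ :=
  fun ω => F.f (shiftInv ω) (γ (shiftInv ω))

section Aux

variable {N : ℕ} {A : Fin N → Fin N → Bool}

lemma shiftInv_shift (ω : Sig N A) : shiftInv (shift ω) = ω := by
  apply Subtype.ext; funext n
  show ω.1 (n - 1 + 1) = ω.1 n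
  have e : n - 1 + 1 = n := by ring
  rw [e]

lemma isClosed_allowed : IsClosed {ω : ℤ → Fin N | Allowed A ω} := by
  have : {ω : ℤ → Fin N | Allowed A ω} =
      ⋂ n : ℤ, {ω : ℤ → Fin N | A (ω n) (ω (n + 1)) = true} := by
    ext ω; simp [Allowed, Set.mem_iInter]
  rw [this]
  refine isClosed_iInter fun n => ?_
  have hc : Continuous (fun ω : ℤ → Fin N => A (ω n) (ω (n + 1))) := by
    have : Continuous (fun p : Fin N × Fin N => A p.1 p.2) :=
      continuous_of_discreteTopology
    have h2 : Continuous (fun ω : ℤ → Fin N => ((ω n, ω (n + 1)) : Fin N × Fin N)) :=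
      (continuous_apply n).prodMk (continuous_apply (n + 1))
    exact this.comp h2
  exact IsClosed.preimage hc (isClosed_discrete ({true} : Set Bool))

instance : CompactSpace (Sig N A) :=
  isCompact_iff_compactSpace.mp (isClosed_allowed (A := A)).isCompact

lemma continuous_shift : Continuous (shift (N := N) (A := A)) := by
  refine Continuous.subtype_mk ?_ _
  exact continuous_pi fun n => (continuous_apply (n + 1)).comp continuous_subtype_val

lemma continuous_shiftInv : Continuous (shiftInv (N := N) (A := A)) := by
  refine Continuous.subtype_mk ?_ _
  exact continuous_pi fun n => (continuous_apply (n - 1)).comp continuous_subtype_val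

lemma fStrictMono (F : SkewSys N A) (ω : Sig N A) : StrictMonoOn (F.f ω) (Icc 0 1) :=
  strictMonoOn_of_hasDerivWithinAt_pos (convex_Icc 0 1) (F.contDiff ω).continuousOn
    (fun x hx => ((((F.contDiff ω).differentiableOn one_ne_zero) x
      (interior_subset hx)).hasDerivWithinAt).mono interior_subset)
    (fun x hx => F.deriv_pos ω x (interior_subset hx))

lemma cont_f_comp (F : SkewSys N A) {γ : Sig N A → ℝ} (hγ : Continuous γ)
    (hmem : ∀ ω, γ ω ∈ Icc (0:ℝ) 1) : Continuous (fun ω => F.f ω (γ ω)) :=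
  F.cont.comp_continuous (continuous_id.prodMk hγ) (fun ω => ⟨mem_univ _, hmem ω⟩)

lemma cont_piece {g : Sig N A × ℝ → ℝ} (hg : ContinuousOn g (univ ×ˢ Icc 0 1)) :
    Continuous (fun p : Sig N A × Icc (0:ℝ) 1 => g (p.1, (p.2 : ℝ))) := by
  refine hg.comp_continuous (continuous_fst.prodMk (continuous_subtype_val.comp continuous_snd))
    (fun p => ⟨mem_univ _, p.2.2⟩)

lemma abs_f_sub_le (F G : SkewSys N A) (ω : Sig N A) {x : ℝ} (hx : x ∈ Icc (0:ℝ) 1) :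
    |F.f ω x - G.f ω x| ≤ SDist F G := by
  set Φ : Sig N A × Icc (0:ℝ) 1 → ℝ := fun p =>
    max
      (max |F.f p.1 p.2 - G.f p.1 p.2|
        |derivWithin (F.f p.1) (Icc 0 1) p.2 - derivWithin (G.f p.1) (Icc 0 1) p.2|)
      (max |F.fInv p.1 p.2 - G.fInv p.1 p.2|
        |derivWithin (F.fInv p.1) (Icc 0 1) p.2 - derivWithin (G.fInv p.1) (Icc 0 1) p.2|)
    with hΦ
  have hcont : Continuous Φ := by
    have c1 := cont_piece F.cont
    have c2 := cont_piece G.cont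
    have c3 := cont_piece F.cont_deriv
    have c4 := cont_piece G.cont_deriv
    have c5 := cont_piece F.inv_cont
    have c6 := cont_piece G.inv_cont
    have c7 := cont_piece F.inv_cont_deriv
    have c8 := cont_piece G.inv_cont_deriv
    exact (((c1.sub c2).abs.max (c3.sub c4).abs).max ((c5.sub c6).abs.max (c7.sub c8).abs))
  have hbdd : BddAbove (Set.range Φ) := (isCompact_range hcont).bddAbove
  have h1 : |F.f ω x - G.f ω x| ≤ Φ (ω, ⟨x, hx⟩) :=
    le_trans (le_max_left _ _) (le_max_left _ _)
  exact le_trans h1 (le_ciSup hbdd (ω, ⟨x, hx⟩))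

end Aux

/-- For a continuous monotone increasing family `(F_τ)_{τ∈(a,b)}`, for
every `τ`, the sets `Up_{τ+} = ⋂_{δ>0} Up(F_{τ+δ})` and `Down_τ = Down(F_τ)` are
disjoint. -/
theorem upPlus_down_disjoint {N : ℕ} {A : Fin N → Fin N → Bool} (hN : 2 ≤ N)
    (htrans : ShiftTransitive N A) (F : ℝ → SkewSys N A) (a b : ℝ)
    (hmono : MonoFam F a b) (hcont : ContFam F a b) :
    ∀ τ ∈ Ioo a b, (⋂ t ∈ Ioo τ b, Up (F t)) ∩ Down (F τ) = ∅ := by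
  intro τ hτ
  rw [Set.eq_empty_iff_forall_notMem]
  rintro ⟨ω₀, x⟩ ⟨hUp, hDown⟩
  obtain ⟨η, hηc, hηmem, hηdown, hη1, hη2⟩ := hDown
  simp only at hη1 hη2
  -- minimum of the drift-down gap over the compact space Σ
  set h : Sig N A → ℝ := fun ω => η ω - (F τ).f (shiftInv ω) (η (shiftInv ω)) with hh
  have hhc : Continuous h :=
    hηc.sub ((cont_f_comp (F τ) hηc hηmem).comp continuous_shiftInv)
  have hhpos : ∀ ω, 0 < h ω := fun ω => sub_pos.mpr (hηdown ω)
  obtain ⟨ωm, -, hmin⟩ :=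
    isCompact_univ.exists_isMinOn ⟨ω₀, mem_univ _⟩ hhc.continuousOn
  set ε : ℝ := min (h ωm) (x - (F τ).f (shiftInv ω₀) (η (shiftInv ω₀))) with hε
  have hεpos : 0 < ε := lt_min (hhpos ωm) (sub_pos.mpr hη1)
  obtain ⟨δ, hδpos, hδ⟩ := hcont τ hτ ε hεpos
  -- choose t ∈ (τ, b) with |t - τ| < δ
  set t : ℝ := min (τ + δ / 2) ((τ + b) / 2) with ht_def
  have hτt : τ < t := lt_min (by linarith) (by linarith [hτ.2])
  have htb : t < b := lt_of_le_of_lt (min_le_right _ _) (by linarith [hτ.2])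
  have htmem : t ∈ Ioo a b := ⟨lt_trans hτ.1 hτt, htb⟩
  have htτ : |t - τ| < δ := by
    rw [abs_lt]
    constructor
    · linarith
    · have := min_le_left (τ + δ / 2) ((τ + b) / 2)
      have : t ≤ τ + δ / 2 := this
      linarith
  have hS : SDist (F t) (F τ) < ε := hδ t htmem htτ
  -- the point drifts up for F t
  have hpUp : (⟨ω₀, x⟩ : Sig N A × ℝ) ∈ Up (F t) := by
    simp only [mem_iInter] at hUp
    exact hUp t ⟨hτt, htb⟩
  obtain ⟨γ, hγc, hγmem, hγup, hγ1, hγ2⟩ := hpUp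
  simp only at hγ1 hγ2
  set G := F t with hG
  -- η drifts down for G as well, by continuity of the family
  have hbound : ∀ ω : Sig N A,
      G.f (shiftInv ω) (η (shiftInv ω)) - (F τ).f (shiftInv ω) (η (shiftInv ω)) < ε := by
    intro ω
    have h1 := abs_f_sub_le G (F τ) (shiftInv ω) (hηmem (shiftInv ω))
    exact lt_of_le_of_lt (le_trans (le_abs_self _) h1) hS
  have hηdown' : DriftsDown G η := by
    intro ω
    have h2 : ε ≤ h ω := le_trans (min_le_left _ _) (hmin (mem_univ ω))
    have h3 := hbound ω
    simp only [hh] at h2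
    linarith
  have hη1' : G.f (shiftInv ω₀) (η (shiftInv ω₀)) < x := by
    have h2 : ε ≤ x - (F τ).f (shiftInv ω₀) (η (shiftInv ω₀)) := min_le_right _ _
    have h3 := hbound ω₀
    linarith
  -- strict monotonicity of the fiber maps of G
  have sm : ∀ ω, StrictMonoOn (G.f ω) (Icc 0 1) := fStrictMono G
  -- the two open sets
  have hU0 : γ ω₀ < η ω₀ := lt_trans hγ1 hη2
  have hW0 : η (shiftInv ω₀) < γ (shiftInv ω₀) := by
    have hlt : G.f (shiftInv ω₀) (η (shiftInv ω₀)) < G.f (shiftInv ω₀) (γ (shiftInv ω₀)) :=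
      lt_trans hη1' hγ2
    exact ((sm (shiftInv ω₀)).lt_iff_lt (hηmem _) (hγmem _)).mp hlt
  have hfwd : ∀ ω : Sig N A, γ ω < η ω → γ (shift ω) < η (shift ω) := by
    intro ω hlt
    have h1 := hγup (shift ω)
    have h3 := hηdown' (shift ω)
    rw [shiftInv_shift] at h1 h3
    have h2 : G.f ω (γ ω) < G.f ω (η ω) := (sm ω) (hγmem ω) (hηmem ω) hlt
    linarith
  have hfwdn : ∀ n : ℕ, ∀ ω : Sig N A, γ ω < η ω →
      γ ((shift (A := A))^[n] ω) < η ((shift (A := A))^[n] ω) := by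
    intro n
    induction n with
    | zero => intro ω hω; simpa using hω
    | succ k ih =>
      intro ω hω
      rw [Function.iterate_succ_apply']
      exact hfwd _ (ih ω hω)
  obtain ⟨n, q, hq⟩ := htrans {ω | γ ω < η ω} {ω | η ω < γ ω}
    (isOpen_lt hγc hηc) (isOpen_lt hηc hγc) ⟨ω₀, hU0⟩ ⟨shiftInv ω₀, hW0⟩
  obtain ⟨⟨u, hu, rfl⟩, hqW⟩ := hq
  exact absurd (hfwdn n u hu) (not_lt.mpr (le_of_lt hqW))

end SkewPaper
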